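/- Type-count characterization: for any b ∈ ℕ, the multiset of types of any σ-type feasible selection of size b equals the multiset of entries of the min-ratio type sequence s(b,b); consequently, the multiset of types of a σ-type feasible selection of size b is unique. -/

import Mathlib

open Finset
open scoped Classical

section

variable {V : Type*} [Fintype V] [DecidableEq V] {r : ℕ}

/-- Number of elements of `S` of type `q`. -/
def typeCnt (type : V → Fin r) (S : Finset V) (q : Fin r) : ℕ :=
  (S.filter (fun e => type e = q)).card

/-- Satisfaction ratio of `S` at type `q`. -/
noncomputable def ratio (p : Fin r → ℝ) (type : V → Fin r) (S : Finset V) (q : Fin r) : ℝ :=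
  (typeCnt type S q : ℝ) / (p q * S.card)

/-- Minimum satisfaction ratio `α_min(S)`. -/
noncomputable def alphaMin [NeZero r] (p : Fin r → ℝ) (type : V → Fin r) (S : Finset V) : ℝ :=
  Finset.univ.inf' Finset.univ_nonempty (fun q => ratio p type S q)

/-- The set `Q(S)` of types attaining the minimum satisfaction ratio. -/
noncomputable def minTypes [NeZero r] (p : Fin r → ℝ) (type : V → Fin r) (S : Finset V) :
    Finset (Fin r) :=
  Finset.univ.filter (fun q => ratio p type S q = alphaMin p type S)

/-- A size-`b` set `S` is `σ`-type feasible. -/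
noncomputable def SigmaTypeFeasible [NeZero r] (p : Fin r → ℝ) (type : V → Fin r)
    (σ : Fin r → Fin r) (b : ℕ) (S : Finset V) : Prop :=
  S.card = b ∧
  (∀ A : Finset V, A.card = b → alphaMin p type A ≤ alphaMin p type S) ∧
  (∀ A : Finset V, A.card = b → alphaMin p type A = alphaMin p type S →
    (minTypes p type S).card ≤ (minTypes p type A).card) ∧
  (∀ A : Finset V, A.card = b → alphaMin p type A = alphaMin p type S →
    (minTypes p type A).card = (minTypes p type S).card →
    ¬ ∃ q q' : Fin r, σ q < σ q' ∧ typeCnt type S q < typeCnt type A q ∧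
      typeCnt type A q' < typeCnt type S q')

/-- Occurrences of `q` among the first `n` entries of the sequence `s`. -/
def seqCount (s : ℕ → Fin r) (q : Fin r) (n : ℕ) : ℕ :=
  ((Finset.range n).filter (fun i => s i = q)).card

/-- `s` is a min-ratio type sequence with denominator `d`: the appended type
minimizes `#(q,prefix)/(p q · d)`, breaking ties by smaller `σ`-value. -/
def IsMinRatioSeq (p : Fin r → ℝ) (σ : Fin r → Fin r) (d : ℕ) (s : ℕ → Fin r) : Prop :=
  ∀ n : ℕ, ∀ q : Fin r,
    (seqCount s (s n) n : ℝ) / (p (s n) * d) < (seqCount s q n : ℝ) / (p q * d) ∨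
    ((seqCount s (s n) n : ℝ) / (p (s n) * d) = (seqCount s q n : ℝ) / (p q * d) ∧
      σ (s n) ≤ σ q)


/-! ### Auxiliary lemmas -/

lemma typeCnt_eq_count (type : V → Fin r) (S : Finset V) (q : Fin r) :
    Multiset.count q (S.val.map type) = typeCnt type S q := by
  rw [Multiset.count_map]
  show _ = Multiset.card (Multiset.filter _ S.val)
  congr 1
  exact Multiset.filter_congr (fun x _ => by simp [eq_comm])

lemma ofFn_eq_count (s : ℕ → Fin r) (b : ℕ) (q : Fin r) :
    Multiset.count q ((List.ofFn (fun i : Fin b => s i) : List (Fin r)) : Multiset (Fin r)) =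
      seqCount s q b := by
  have h : ((List.ofFn (fun i : Fin b => s i) : List (Fin r)) : Multiset (Fin r))
      = Multiset.map (fun i => s i) (Finset.range b).val := by
    rw [List.ofFn_eq_map]
    have h2 : (List.finRange b).map (fun i : Fin b => s ↑i)
        = ((List.finRange b).map Fin.val).map (fun i => s i) := by
      rw [List.map_map]; rfl
    rw [h2, List.map_coe_finRange_eq_range]
    rfl
  rw [h, Multiset.count_map]
  show _ = Multiset.card (Multiset.filter _ (Finset.range b).val)
  congr 1
  exact Multiset.filter_congr (fun x _ => by simp [eq_comm])

lemma sum_typeCnt (type : V → Fin r) (S : Finset V) :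
    ∑ q, typeCnt type S q = S.card :=
  (Finset.card_eq_sum_card_fiberwise (fun x _ => Finset.mem_univ (type x))).symm

lemma sum_seqCount (s : ℕ → Fin r) (b : ℕ) :
    ∑ q, seqCount s q b = b := by
  have h := Finset.card_eq_sum_card_fiberwise
    (f := fun i => s i) (s := Finset.range b) (t := Finset.univ)
    (fun x _ => Finset.mem_univ _)
  rw [Finset.card_range] at h
  exact h.symm

lemma seqCount_mono (s : ℕ → Fin r) (q : Fin r) {a b : ℕ} (h : a ≤ b) :
    seqCount s q a ≤ seqCount s q b :=
  Finset.card_le_card (Finset.filter_subset_filter _ (Finset.range_subset_range.2 h))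

lemma exists_finset_of_counts (type : V → Fin r) (c : Fin r → ℕ)
    (h : ∀ q, c q ≤ typeCnt type (Finset.univ : Finset V) q) :
    ∃ A : Finset V, ∀ q, typeCnt type A q = c q := by
  choose B hB hBcard using fun q => Finset.exists_subset_card_eq (h q)
  refine ⟨Finset.univ.biUnion B, fun q => ?_⟩
  have hkey : (Finset.univ.biUnion B).filter (fun e => type e = q) = B q := by
    ext e
    simp only [Finset.mem_filter, Finset.mem_biUnion, Finset.mem_univ, true_and]
    constructor
    · rintro ⟨⟨q', hq'⟩, ht⟩
      have h2 : type e = q' := (Finset.mem_filter.1 (hB q' hq')).2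
      exact (h2.symm.trans ht) ▸ hq'
    · intro he
      exact ⟨⟨q, he⟩, (Finset.mem_filter.1 (hB q he)).2⟩
  show (Finset.filter _ _).card = c q
  rw [hkey]
  exact hBcard q

/-- Greedy last-step property: just before the last insertion of `q`, type `q`
was a minimizer. -/
lemma minRatio_last_step (p : Fin r → ℝ) (hp : ∀ q, 0 < p q) (σ : Fin r → Fin r)
    {b : ℕ} (hb : 0 < b) {s : ℕ → Fin r} (hs : IsMinRatioSeq p σ b s)
    (q q' : Fin r) (h1 : 1 ≤ seqCount s q b) :
    ((seqCount s q b - 1 : ℕ) : ℝ) / (p q * b) < (seqCount s q' b : ℝ) / (p q' * b) ∨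
    (((seqCount s q b - 1 : ℕ) : ℝ) / (p q * b) = (seqCount s q' b : ℝ) / (p q' * b) ∧
      σ q ≤ σ q') := by
  classical
  set F := (Finset.range b).filter (fun i => s i = q) with hF
  have hFcard : F.card = seqCount s q b := rfl
  have hFne : F.Nonempty := Finset.card_pos.1 (by rw [hFcard]; omega)
  set n' := F.max' hFne with hn'
  have hn'F : n' ∈ F := F.max'_mem hFne
  have hn'b : n' < b := Finset.mem_range.1 (Finset.mem_filter.1 hn'F).1
  have hsn' : s n' = q := (Finset.mem_filter.1 hn'F).2
  have hcount : seqCount s q n' = seqCount s q b - 1 := by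
    have hset : (Finset.range n').filter (fun i => s i = q) = F.erase n' := by
      ext i
      simp only [Finset.mem_filter, Finset.mem_range, Finset.mem_erase, hF]
      constructor
      · rintro ⟨hi, hsi⟩
        exact ⟨Nat.ne_of_lt hi, hi.trans hn'b, hsi⟩
      · rintro ⟨hne, hib, hsi⟩
        refine ⟨lt_of_le_of_ne (F.le_max' i ?_) hne, hsi⟩
        rw [hF]
        exact Finset.mem_filter.2 ⟨Finset.mem_range.2 hib, hsi⟩
    show (Finset.filter _ _).card = _
    rw [hset, Finset.card_erase_of_mem hn'F, hFcard]
  have hle : seqCount s q' n' ≤ seqCount s q' b := seqCount_mono s q' (le_of_lt hn'b)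
  have H := hs n' q'
  rw [hsn', hcount] at H
  have hpos : (0:ℝ) < p q' * b := mul_pos (hp q') (by exact_mod_cast hb)
  have hu : (seqCount s q' n' : ℝ) / (p q' * b) ≤ (seqCount s q' b : ℝ) / (p q' * b) :=
    (div_le_div_iff_of_pos_right hpos).2 (by exact_mod_cast hle)
  rcases H with H | ⟨Heq, hσle⟩
  · exact Or.inl (lt_of_lt_of_le H hu)
  · rcases lt_or_eq_of_le hu with h | h
    · exact Or.inl (Heq ▸ h)
    · exact Or.inr ⟨Heq.trans h, hσle⟩

/-- Core argument: a feasible `S`, compared against a realization `A` of the greedy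
counts, must have exactly the greedy counts. -/
lemma core_counts [NeZero r] (p : Fin r → ℝ) (hp : ∀ q, 0 < p q)
    (type : V → Fin r) (σ : Fin r → Fin r) (hσ : Function.Injective σ)
    {b : ℕ} (hb : 0 < b) {s : ℕ → Fin r} (hs : IsMinRatioSeq p σ b s)
    (S A : Finset V) (hScard : S.card = b) (hAcard : A.card = b)
    (hA : ∀ q, typeCnt type A q = seqCount s q b)
    (hF1 : alphaMin p type A ≤ alphaMin p type S)
    (hF2 : alphaMin p type A = alphaMin p type S →
      (minTypes p type S).card ≤ (minTypes p type A).card)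
    (hF3 : alphaMin p type A = alphaMin p type S →
      (minTypes p type A).card = (minTypes p type S).card →
      ¬ ∃ q q' : Fin r, σ q < σ q' ∧ typeCnt type S q < typeCnt type A q ∧
        typeCnt type A q' < typeCnt type S q')
    (q0 : Fin r) : typeCnt type S q0 = typeCnt type A q0 := by
  classical
  set n := typeCnt type S with hn
  set a := typeCnt type A with ha
  have hpb : ∀ q, (0:ℝ) < p q * b := fun q => mul_pos (hp q) (by exact_mod_cast hb)
  have hsumn : ∑ q, n q = b := by rw [hn, sum_typeCnt]; exact hScard
  have hsuma : ∑ q, a q = b := by rw [ha, sum_typeCnt]; exact hAcard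
  have hratioS : ∀ q, ratio p type S q = (n q : ℝ) / (p q * b) := by
    intro q; simp only [ratio, hScard, hn]
  have hratioA : ∀ q, ratio p type A q = (a q : ℝ) / (p q * b) := by
    intro q; simp only [ratio, hAcard, ha]
  have LA : ∀ q q', 1 ≤ a q →
      ((a q - 1 : ℕ) : ℝ) / (p q * b) < (a q' : ℝ) / (p q' * b) ∨
      (((a q - 1 : ℕ) : ℝ) / (p q * b) = (a q' : ℝ) / (p q' * b) ∧ σ q ≤ σ q') := by
    intro q q' h1
    have h2 := minRatio_last_step p hp σ hb hs q q' (by rwa [hA q] at h1)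
    simpa only [← hA] using h2
  have LAle : ∀ q q', 1 ≤ a q →
      ((a q - 1 : ℕ) : ℝ) / (p q * b) ≤ (a q' : ℝ) / (p q' * b) := by
    intro q q' h1
    rcases LA q q' h1 with h | ⟨h, -⟩
    · exact le_of_lt h
    · exact le_of_eq h
  have hαA_le : ∀ q, alphaMin p type A ≤ ratio p type A q :=
    fun q => Finset.inf'_le _ (Finset.mem_univ q)
  have hαS_le : ∀ q, alphaMin p type S ≤ ratio p type S q :=
    fun q => Finset.inf'_le _ (Finset.mem_univ q)
  obtain ⟨qA, -, hqA0⟩ := Finset.exists_mem_eq_inf'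
    (Finset.univ_nonempty) (fun q => ratio p type A q)
  have hqA : alphaMin p type A = ratio p type A qA := hqA0
  have key : ∀ q, n q < a q →
      ((a q - 1 : ℕ) : ℝ) / (p q * b) ≤ alphaMin p type A := by
    intro q hq
    have h1 : 1 ≤ a q := by omega
    rw [hqA, hratioA qA]
    exact LAle q qA h1
  have keyn : ∀ q, n q < a q → (n q : ℝ) / (p q * b) ≤ alphaMin p type A := by
    intro q hq
    refine le_trans ?_ (key q hq)
    exact (div_le_div_iff_of_pos_right (hpb q)).2
      (by exact_mod_cast (by omega : n q ≤ a q - 1))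
  have hαge : alphaMin p type S ≤ alphaMin p type A := by
    by_contra hlt
    push_neg at hlt
    have hqAcnt : a qA < n qA := by
      have hlt2 : (a qA : ℝ) / (p qA * b) < (n qA : ℝ) / (p qA * b) := by
        calc (a qA : ℝ) / (p qA * b) = alphaMin p type A := by rw [hqA, hratioA]
          _ < alphaMin p type S := hlt
          _ ≤ ratio p type S qA := hαS_le qA
          _ = (n qA : ℝ) / (p qA * b) := hratioS qA
      have h3 := (div_lt_div_iff_of_pos_right (hpb qA)).1 hlt2
      exact_mod_cast h3
    have hex : ∃ q, n q < a q := by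
      by_contra hno
      push_neg at hno
      have hsl : ∑ q, a q < ∑ q, n q :=
        Finset.sum_lt_sum (fun i _ => hno i) ⟨qA, Finset.mem_univ qA, hqAcnt⟩
      omega
    obtain ⟨q, hq⟩ := hex
    have h1 : alphaMin p type S ≤ (n q : ℝ) / (p q * b) := (hαS_le q).trans_eq (hratioS q)
    exact absurd (h1.trans (keyn q hq)) (not_le.2 hlt)
  have hα : alphaMin p type A = alphaMin p type S := le_antisymm hF1 hαge
  by_contra hq0
  set Dm := Finset.univ.filter (fun q => n q < a q) with hDm
  set Dp := Finset.univ.filter (fun q => a q < n q) with hDp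
  have hDmprop : ∀ q ∈ Dm, n q + 1 = a q ∧ ratio p type S q = alphaMin p type S ∧
      ratio p type A q ≠ alphaMin p type A ∧
      (∀ q', ratio p type A q' = alphaMin p type A → σ q ≤ σ q') := by
    intro q hq
    have hq' : n q < a q := (Finset.mem_filter.1 hq).2
    have h1 : 1 ≤ a q := by omega
    have hchain1 : alphaMin p type S ≤ (n q : ℝ) / (p q * b) :=
      (hαS_le q).trans_eq (hratioS q)
    have hchain2 : (n q : ℝ) / (p q * b) ≤ ((a q - 1 : ℕ) : ℝ) / (p q * b) :=
      (div_le_div_iff_of_pos_right (hpb q)).2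
        (by exact_mod_cast (by omega : n q ≤ a q - 1))
    have hchain3 : ((a q - 1 : ℕ) : ℝ) / (p q * b) ≤ alphaMin p type A := key q hq'
    have e1 : (n q : ℝ) / (p q * b) = alphaMin p type S :=
      le_antisymm (hchain2.trans (hchain3.trans_eq hα)) hchain1
    have e2 : ((a q - 1 : ℕ) : ℝ) / (p q * b) = alphaMin p type A :=
      le_antisymm hchain3 (hα ▸ (e1 ▸ hchain2))
    have e3 : n q + 1 = a q := by
      have hnum : (n q : ℝ) = ((a q - 1 : ℕ) : ℝ) :=
        (div_left_inj' (hpb q).ne').mp (e1.trans (hα ▸ e2.symm))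
      have h4 : n q = a q - 1 := by exact_mod_cast hnum
      omega
    refine ⟨e3, (hratioS q).trans e1, ?_, ?_⟩
    · rw [hratioA q]
      intro hcon
      have hlt : ((a q - 1 : ℕ) : ℝ) / (p q * b) < (a q : ℝ) / (p q * b) :=
        (div_lt_div_iff_of_pos_right (hpb q)).2
          (by exact_mod_cast (by omega : a q - 1 < a q))
      exact absurd (e2.trans hcon.symm) (ne_of_lt hlt)
    · intro q' h'
      rw [hratioA q'] at h'
      rcases LA q q' h1 with h | ⟨-, hσle⟩
      · exact absurd (e2.trans h'.symm) (ne_of_lt h)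
      · exact hσle
  have hDpprop : ∀ q ∈ Dp, ratio p type S q ≠ alphaMin p type S := by
    intro q hq
    have hq' : a q < n q := (Finset.mem_filter.1 hq).2
    have h1 : alphaMin p type S ≤ ratio p type A q := hα ▸ hαA_le q
    have h2 : ratio p type A q < ratio p type S q := by
      rw [hratioS, hratioA]
      exact (div_lt_div_iff_of_pos_right (hpb q)).2 (by exact_mod_cast hq')
    exact ne_of_gt (lt_of_le_of_lt h1 h2)
  -- integer counting
  have hsum0 : ∑ q, ((n q : ℤ) - a q) = 0 := by
    rw [Finset.sum_sub_distrib, ← Nat.cast_sum, ← Nat.cast_sum, hsumn, hsuma, sub_self]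
  have hsplit1 := Finset.sum_filter_add_sum_filter_not Finset.univ
    (fun q => n q < a q) (fun q => (n q : ℤ) - a q)
  have hsplit2 := Finset.sum_filter_add_sum_filter_not
    (Finset.univ.filter (fun q => ¬ n q < a q)) (fun q => a q < n q)
    (fun q => (n q : ℤ) - a q)
  have hDpId : (Finset.univ.filter (fun q => ¬ n q < a q)).filter (fun q => a q < n q)
      = Dp := by
    ext q
    simp only [Finset.mem_filter, Finset.mem_univ, true_and, hDp]
    omega
  have hzero : ∑ q ∈ (Finset.univ.filter (fun q => ¬ n q < a q)).filter
      (fun q => ¬ a q < n q), ((n q : ℤ) - a q) = 0 := by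
    apply Finset.sum_eq_zero
    intro q hq
    have h1 := (Finset.mem_filter.1 hq).2
    have h2 := (Finset.mem_filter.1 (Finset.mem_filter.1 hq).1).2
    omega
  have hDmone : ∀ q ∈ Dm, ((n q : ℤ) - a q) = -1 := by
    intro q hq
    have h4 := (hDmprop q hq).1
    omega
  have hsumDm : ∑ q ∈ Dm, ((n q : ℤ) - a q) = -(Dm.card : ℤ) := by
    rw [Finset.sum_congr rfl hDmone]
    simp
  rw [← hDm, hsum0] at hsplit1
  rw [hDpId, hzero] at hsplit2
  have hsumDp : ∑ q ∈ Dp, ((n q : ℤ) - a q) = (Dm.card : ℤ) := by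
    linarith [hsplit1, hsplit2, hsumDm]
  have hDpterm : ∀ q ∈ Dp, (1 : ℤ) ≤ (n q : ℤ) - a q := by
    intro q hq
    have h1 := (Finset.mem_filter.1 hq).2
    omega
  have hDple : Dp.card ≤ Dm.card := by
    have h5 := Finset.card_nsmul_le_sum Dp (fun q => (n q : ℤ) - a q) 1 hDpterm
    rw [hsumDp] at h5
    simp only [nsmul_eq_mul, mul_one] at h5
    exact_mod_cast h5
  have hDmne : Dm.Nonempty := by
    rcases Nat.lt_or_ge (n q0) (a q0) with h | h
    · exact ⟨q0, Finset.mem_filter.2 ⟨Finset.mem_univ _, h⟩⟩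
    · have hq0Dp : q0 ∈ Dp := Finset.mem_filter.2 ⟨Finset.mem_univ _, by omega⟩
      have h6 : (1 : ℤ) ≤ ∑ q ∈ Dp, ((n q : ℤ) - a q) :=
        le_trans (hDpterm q0 hq0Dp)
          (Finset.single_le_sum (f := fun q => (n q : ℤ) - a q)
            (fun i hi => le_trans zero_le_one (hDpterm i hi)) hq0Dp)
      rw [hsumDp] at h6
      rw [← Finset.card_pos]
      exact_mod_cast lt_of_lt_of_le zero_lt_one h6
  have hQn : ∀ q, q ∈ minTypes p type S ↔ ratio p type S q = alphaMin p type S := by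
    intro q; simp [minTypes]
  have hQm : ∀ q, q ∈ minTypes p type A ↔ ratio p type A q = alphaMin p type A := by
    intro q; simp [minTypes]
  have hQeq : minTypes p type S = ((minTypes p type A) \ Dp) ∪ Dm := by
    ext q
    rw [Finset.mem_union, Finset.mem_sdiff, hQn, hQm]
    rcases lt_trichotomy (n q) (a q) with h | h | h
    · have hqDm : q ∈ Dm := Finset.mem_filter.2 ⟨Finset.mem_univ _, h⟩
      simp only [hqDm, or_true, iff_true]
      exact (hDmprop q hqDm).2.1
    · have hqnotDm : q ∉ Dm := by
        rw [hDm]; simp only [Finset.mem_filter, Finset.mem_univ, true_and]; omega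
      have hqnotDp : q ∉ Dp := by
        rw [hDp]; simp only [Finset.mem_filter, Finset.mem_univ, true_and]; omega
      have hr : ratio p type S q = ratio p type A q := by
        rw [hratioS, hratioA, h]
      constructor
      · intro hl
        exact Or.inl ⟨hr.symm.trans (hl.trans hα.symm), hqnotDp⟩
      · rintro (⟨hl, -⟩ | hqDm)
        · exact hr.trans (hl.trans hα)
        · exact absurd hqDm hqnotDm
    · have hqDp : q ∈ Dp := Finset.mem_filter.2 ⟨Finset.mem_univ _, h⟩
      have hqnotDm : q ∉ Dm := by
        rw [hDm]; simp only [Finset.mem_filter, Finset.mem_univ, true_and]; omega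
      simp only [hqDp, not_true, and_false, false_or]
      constructor
      · intro hl
        exact absurd hl (hDpprop q hqDp)
      · intro hl
        exact absurd hl hqnotDm
  have hdisj : Disjoint ((minTypes p type A) \ Dp) Dm := by
    rw [Finset.disjoint_right]
    intro q hq hq2
    exact (hDmprop q hq).2.2.1 ((hQm q).1 (Finset.mem_sdiff.1 hq2).1)
  have hcardeq : (minTypes p type S).card = ((minTypes p type A) \ Dp).card + Dm.card := by
    rw [hQeq, Finset.card_union_of_disjoint hdisj]
  have hsdiff := Finset.card_sdiff_add_card_inter (minTypes p type A) Dp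
  have hinterle : ((minTypes p type A) ∩ Dp).card ≤ Dp.card :=
    Finset.card_le_card Finset.inter_subset_right
  have hF2' := hF2 hα
  have hQQ : (minTypes p type A).card = (minTypes p type S).card := by omega
  have hinter_eq : ((minTypes p type A) ∩ Dp).card = Dm.card := by omega
  have hinterne : ((minTypes p type A) ∩ Dp).Nonempty := by
    rw [← Finset.card_pos, hinter_eq, Finset.card_pos]
    exact hDmne
  obtain ⟨q', hq'⟩ := hinterne
  obtain ⟨q, hq⟩ := hDmne
  have hq'Qm : ratio p type A q' = alphaMin p type A :=
    (hQm q').1 (Finset.mem_inter.1 hq').1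
  have hσle : σ q ≤ σ q' := (hDmprop q hq).2.2.2 q' hq'Qm
  have hneq : q ≠ q' := by
    intro h
    subst h
    have h1 : n q < a q := (Finset.mem_filter.1 hq).2
    have h2 : a q < n q := (Finset.mem_filter.1 (Finset.mem_inter.1 hq').2).2
    omega
  have hσlt : σ q < σ q' := lt_of_le_of_ne hσle (fun h => hneq (hσ h))
  exact hF3 hα hQQ ⟨q, q', hσlt, (Finset.mem_filter.1 hq).2,
    (Finset.mem_filter.1 (Finset.mem_inter.1 hq').2).2⟩

/-- type-count characterization. For any `b`, the multiset of types of any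
`σ`-type feasible selection of size `b` equals the multiset of the first `b` entries of
the min-ratio type sequence `s(b,b)`; consequently any two `σ`-type feasible selections
of size `b` have the same multiset of types. -/
theorem sigma_type_feasible_type_multiset [NeZero r]
    (p : Fin r → ℝ) (hp : ∀ q, 0 < p q)
    (type : V → Fin r) (σ : Fin r → Fin r) (hσ : Function.Injective σ)
    (b : ℕ)
    (havail : ∀ q : Fin r, b ≤ typeCnt type (Finset.univ : Finset V) q)
    (s : ℕ → Fin r) (hs : IsMinRatioSeq p σ b s)
    (S : Finset V) (hS : SigmaTypeFeasible p type σ b S) :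
    S.val.map type = ((List.ofFn (fun i : Fin b => s i) : List (Fin r)) : Multiset (Fin r)) ∧
    (∀ S' : Finset V, SigmaTypeFeasible p type σ b S' →
      S.val.map type = S'.val.map type) := by
  classical
  have main : ∀ T : Finset V, SigmaTypeFeasible p type σ b T →
      T.val.map type =
        ((List.ofFn (fun i : Fin b => s i) : List (Fin r)) : Multiset (Fin r)) := by
    intro T hT
    rcases Nat.eq_zero_or_pos b with rfl | hb
    · have hT0 : T = ∅ := Finset.card_eq_zero.1 hT.1
      subst hT0
      simp
    · have hmb : ∀ q, seqCount s q b ≤ b := by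
        intro q
        calc seqCount s q b ≤ ∑ q', seqCount s q' b :=
              Finset.single_le_sum (f := fun q' => seqCount s q' b)
                (fun _ _ => Nat.zero_le _) (Finset.mem_univ q)
          _ = b := sum_seqCount s b
      obtain ⟨A, hA⟩ := exists_finset_of_counts type (fun q => seqCount s q b)
        (fun q => (hmb q).trans (havail q))
      have hAcard : A.card = b := by
        rw [← sum_typeCnt type A]
        simp only [hA]
        exact sum_seqCount s b
      obtain ⟨hTcard, h1, h2, h3⟩ := hT
      have hcounts : ∀ q, typeCnt type T q = typeCnt type A q :=
        core_counts p hp type σ hσ hb hs T A hTcard hAcard hA (h1 A hAcard)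
          (h2 A hAcard) (h3 A hAcard)
      refine Multiset.ext.2 (fun q => ?_)
      rw [typeCnt_eq_count, ofFn_eq_count, hcounts q, hA q]
  exact ⟨main S hS, fun S' hS' => (main S hS).trans (main S' hS').symm⟩

end
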